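/- (Legendre) Let a, n be real numbers with n/2 < a < n. Then (∫_0^∞ z^{n−a−1} (1 + z^n)^{−1/2} dz) · (∫_0^1 x^{a−1} (1 − x^n)^{−1/2} dx) = 2π / (n·(2a − n)·sin(πa/n)). -/

import Mathlib

open MeasureTheory Real

lemma beta_real {u v : ℝ} (hu : 0 < u) (hv : 0 < v) :
    ∫ x in (0:ℝ)..1, x ^ (u-1) * (1-x) ^ (v-1) =
      Real.Gamma u * Real.Gamma v / Real.Gamma (u+v) := by
  have h := Complex.Gamma_mul_Gamma_eq_betaIntegral
    (s := (u:ℂ)) (t := (v:ℂ)) (by simpa) (by simpa)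
  have hbeta : Complex.betaIntegral u v =
      ((∫ x in (0:ℝ)..1, x ^ (u-1) * (1-x) ^ (v-1) : ℝ) : ℂ) := by
    rw [Complex.betaIntegral, ← intervalIntegral.integral_ofReal]
    refine intervalIntegral.integral_congr fun x hx => ?_
    rw [Set.uIcc_of_le (by norm_num : (0:ℝ) ≤ 1)] at hx
    obtain ⟨hx0, hx1⟩ := hx
    rw [Complex.ofReal_mul, Complex.ofReal_cpow hx0,
      Complex.ofReal_cpow (by linarith : (0:ℝ) ≤ 1 - x)]
    push_cast
    ring
  have hG : Complex.Gamma ((u:ℂ)+(v:ℂ)) = ((Real.Gamma (u+v) : ℝ) : ℂ) := by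
    rw [← Complex.ofReal_add, Complex.Gamma_ofReal]
  rw [hbeta, hG, Complex.Gamma_ofReal, Complex.Gamma_ofReal, ← Complex.ofReal_mul,
    ← Complex.ofReal_mul] at h
  have h' : Real.Gamma u * Real.Gamma v
      = Real.Gamma (u+v) * ∫ x in (0:ℝ)..1, x ^ (u-1) * (1-x) ^ (v-1) := by
    exact_mod_cast h
  have hne : Real.Gamma (u+v) ≠ 0 := (Real.Gamma_pos_of_pos (by linarith)).ne'
  field_simp [h']
  rw [h']; ring


lemma image_div : (fun x : ℝ => x / (1 - x)) '' Set.Ioo 0 1 = Set.Ioi 0 := by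
  ext y
  constructor
  · rintro ⟨x, ⟨hx0, hx1⟩, rfl⟩
    exact div_pos hx0 (by linarith)
  · intro hy
    rw [Set.mem_Ioi] at hy
    refine ⟨y / (1+y), ⟨div_pos hy (by linarith), ?_⟩, ?_⟩
    · rw [div_lt_one (by linarith)]; linarith
    · have : (1:ℝ) + y ≠ 0 := by linarith
      field_simp
      ring

lemma beta_Ioi {u v : ℝ} (hu : 0 < u) (hv : 0 < v) :
    ∫ t in Set.Ioi (0:ℝ), t ^ (u-1) * (1+t) ^ (-(u+v)) =
      Real.Gamma u * Real.Gamma v / Real.Gamma (u+v) := by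
  rw [← image_div,
    MeasureTheory.integral_image_eq_integral_abs_deriv_smul measurableSet_Ioo
      (f' := fun x => 1 / (1-x)^2)
      (fun x hx => by
        obtain ⟨hx0, hx1⟩ := hx
        have h1 : (1:ℝ) - x ≠ 0 := by linarith
        have := (hasDerivAt_id x).div ((hasDerivAt_const x 1).sub (hasDerivAt_id x)) h1
        exact (this.congr_deriv (by simp)).hasDerivWithinAt)
      (fun x hx y hy hxy => by
        obtain ⟨hx0, hx1⟩ := hx
        obtain ⟨hy0, hy1⟩ := hy
        have h1 : (1:ℝ) - x ≠ 0 := by linarith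
        have h2 : (1:ℝ) - y ≠ 0 := by linarith
        field_simp at hxy
        linarith)]
  rw [← beta_real hu hv, intervalIntegral.integral_of_le (by norm_num : (0:ℝ) ≤ 1),
    MeasureTheory.integral_Ioc_eq_integral_Ioo]
  refine setIntegral_congr_fun measurableSet_Ioo fun x hx => ?_
  obtain ⟨hx0, hx1⟩ := hx
  have hp : (0:ℝ) < 1 - x := by linarith
  have h1 : 1 + x / (1-x) = (1-x)⁻¹ := by field_simp; ring
  rw [smul_eq_mul, h1, Real.div_rpow hx0.le hp.le, Real.inv_rpow hp.le,
    Real.rpow_neg hp.le, inv_inv, abs_of_pos (by positivity)]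
  rw [div_eq_mul_inv (x ^ (u-1)), ← Real.rpow_neg hp.le, ← Real.rpow_natCast (1-x) 2,
    one_div, ← Real.rpow_neg hp.le]
  rw [show ((1:ℝ)-x) ^ (-((2:ℕ):ℝ)) * (x ^ (u-1) * (1-x) ^ (-(u-1)) * (1-x) ^ (u+v))
      = x ^ (u-1) * ((1-x) ^ (-((2:ℕ):ℝ)) * (1-x) ^ (-(u-1)) * (1-x) ^ (u+v)) by ring,
    ← Real.rpow_add hp, ← Real.rpow_add hp]
  congr 1
  push_cast
  ring

set_option maxHeartbeats 1000000 in
theorem legendre_z2 (a n : ℝ) (h1 : n / 2 < a) (h2 : a < n) :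
    (∫ z in Set.Ioi (0:ℝ), z ^ (n - a - 1) * (1 + z ^ n) ^ (-(1:ℝ)/2)) *
      (∫ x in (0:ℝ)..1, x ^ (a - 1) * (1 - x ^ n) ^ (-(1:ℝ)/2)) =
      2 * Real.pi / (n * (2 * a - n) * Real.sin (Real.pi * a / n)) := by
  have hn : 0 < n := by linarith
  obtain ⟨s, hs_def⟩ : ∃ s : ℝ, s = a / n := ⟨_, rfl⟩
  have hns : n * s = a := by rw [hs_def]; field_simp
  have hs1 : 1/2 < s := by rw [hs_def, lt_div_iff₀ hn]; linarith
  have hs2 : s < 1 := by rw [hs_def, div_lt_one hn]; linarith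
  have hu : (0:ℝ) < 1 - s := by linarith
  have hv : (0:ℝ) < s - 1/2 := by linarith
  -- first integral
  have hA : ∫ t in Set.Ioi (0:ℝ), t ^ (-s) * (1+t) ^ (-(1:ℝ)/2) =
      Real.Gamma (1-s) * Real.Gamma (s-1/2) / Real.Gamma (1/2) := by
    rw [show (-(1:ℝ)/2) = -((1-s)+(s-1/2)) by ring, show (-s) = (1-s)-1 by ring,
      beta_Ioi hu hv, show ((1:ℝ)-s)+(s-1/2) = 1/2 by ring]
  have hI1 : (∫ z in Set.Ioi (0:ℝ), z ^ (n - a - 1) * (1 + z ^ n) ^ (-(1:ℝ)/2)) =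
      (1/n) * (Real.Gamma (1-s) * Real.Gamma (s-1/2) / Real.Gamma (1/2)) := by
    rw [← hA, ← MeasureTheory.integral_comp_rpow_Ioi
      (fun t => t ^ (-s) * (1+t) ^ (-(1:ℝ)/2)) hn.ne', ← integral_const_mul]
    refine setIntegral_congr_fun measurableSet_Ioi fun z hz => ?_
    rw [Set.mem_Ioi] at hz
    simp only [smul_eq_mul]
    rw [← Real.rpow_mul hz.le, abs_of_pos hn,
      show n * -s = -a by rw [mul_neg, hns]]
    rw [show (1/n) * (n * z ^ (n-1) * (z ^ (-a) * (1+z^n) ^ (-(1:ℝ)/2)))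
        = z ^ (n-1) * z ^ (-a) * (1+z^n) ^ (-(1:ℝ)/2) by field_simp,
      ← Real.rpow_add hz, show n - 1 + -a = n - a - 1 by ring]
  -- second integral
  have himg : (fun x : ℝ => x ^ n) '' Set.Ioo 0 1 = Set.Ioo 0 1 := by
    ext y
    constructor
    · rintro ⟨x, ⟨hx0, hx1⟩, rfl⟩
      exact ⟨Real.rpow_pos_of_pos hx0 n, Real.rpow_lt_one hx0.le hx1 hn⟩
    · rintro ⟨hy0, hy1⟩
      refine ⟨y ^ n⁻¹, ⟨Real.rpow_pos_of_pos hy0 _,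
        Real.rpow_lt_one hy0.le hy1 (by positivity)⟩, ?_⟩
      show (y ^ n⁻¹ : ℝ) ^ n = y
      rw [← Real.rpow_mul hy0.le, inv_mul_cancel₀ hn.ne', Real.rpow_one]
  have hB : ∫ t in Set.Ioo (0:ℝ) 1, t ^ (s-1) * (1-t) ^ (-(1:ℝ)/2) =
      Real.Gamma s * Real.Gamma (1/2) / Real.Gamma (s+1/2) := by
    rw [← MeasureTheory.integral_Ioc_eq_integral_Ioo,
      ← intervalIntegral.integral_of_le (by norm_num : (0:ℝ) ≤ 1),
      show (-(1:ℝ)/2) = 1/2 - 1 by ring, beta_real (by linarith) (by norm_num)]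
  have key : ∫ t in Set.Ioo (0:ℝ) 1, t ^ (s-1) * (1-t) ^ (-(1:ℝ)/2) =
      n * ∫ x in Set.Ioo (0:ℝ) 1, x ^ (a-1) * (1-x^n) ^ (-(1:ℝ)/2) := by
    conv_lhs => rw [← himg]
    rw [MeasureTheory.integral_image_eq_integral_abs_deriv_smul measurableSet_Ioo
        (f' := fun x => n * x ^ (n-1))
        (fun x hx => ((Real.hasDerivAt_rpow_const (Or.inl hx.1.ne')).hasDerivWithinAt))
        (fun x hx y hy hxy => by
          by_contra hne
          rcases lt_or_gt_of_ne hne with h | h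
          · exact absurd hxy (Real.rpow_lt_rpow hx.1.le h hn).ne
          · exact absurd hxy.symm (Real.rpow_lt_rpow hy.1.le h hn).ne),
      ← integral_const_mul]
    refine setIntegral_congr_fun measurableSet_Ioo fun x hx => ?_
    obtain ⟨hx0, hx1⟩ := hx
    simp only [smul_eq_mul]
    rw [← Real.rpow_mul hx0.le, abs_of_pos (by positivity : (0:ℝ) < n * x ^ (n-1)),
      show n * (s-1) = a - n by rw [mul_sub, hns]; ring]
    rw [show n * x ^ (n-1) * (x ^ (a-n) * (1-x^n) ^ (-(1:ℝ)/2))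
        = n * (x ^ (n-1) * x ^ (a-n) * (1-x^n) ^ (-(1:ℝ)/2)) by ring,
      ← Real.rpow_add hx0, show n - 1 + (a - n) = a - 1 by ring]
  have hI2 : (∫ x in (0:ℝ)..1, x ^ (a - 1) * (1 - x ^ n) ^ (-(1:ℝ)/2)) =
      (1/n) * (Real.Gamma s * Real.Gamma (1/2) / Real.Gamma (s+1/2)) := by
    rw [intervalIntegral.integral_of_le (by norm_num : (0:ℝ) ≤ 1),
      MeasureTheory.integral_Ioc_eq_integral_Ioo, ← hB, key, ← mul_assoc,
      one_div, inv_mul_cancel₀ hn.ne', one_mul]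
  -- combine
  rw [hI1, hI2]
  have hGv : 0 < Real.Gamma (s-1/2) := Real.Gamma_pos_of_pos hv
  have hGu : 0 < Real.Gamma (1-s) := Real.Gamma_pos_of_pos hu
  have hGs : 0 < Real.Gamma s := Real.Gamma_pos_of_pos (by linarith)
  have hGh : 0 < Real.Gamma (1/2) := Real.Gamma_pos_of_pos (by norm_num)
  have hGadd : Real.Gamma (s+1/2) = (s-1/2) * Real.Gamma (s-1/2) := by
    rw [show s + 1/2 = (s-1/2) + 1 by ring, Real.Gamma_add_one hv.ne']
  have hrefl : Real.Gamma s * Real.Gamma (1-s) = Real.pi / Real.sin (Real.pi * s) :=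
    Real.Gamma_mul_Gamma_one_sub s
  have hsin : 0 < Real.sin (Real.pi * s) :=
    Real.sin_pos_of_pos_of_lt_pi (by positivity)
      (by nlinarith [Real.pi_pos])
  rw [show Real.pi * a / n = Real.pi * s by rw [hs_def]; ring, hGadd,
    show 2 * a - n = n * (2 * (s - 1/2)) by rw [show n * (2*(s-1/2)) = 2*(n*s) - n by ring, hns]]
  generalize hc : s - 1/2 = c
  have hc0 : (0:ℝ) < c := hc ▸ hv
  have hGc : 0 < Real.Gamma c := hc ▸ hGv
  rw [show (1/n * (Real.Gamma (1-s) * Real.Gamma c / Real.Gamma (1/2))) *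
      (1/n * (Real.Gamma s * Real.Gamma (1/2) / (c * Real.Gamma c)))
      = (Real.Gamma s * Real.Gamma (1-s)) / (n^2*c) *
        (Real.Gamma c / Real.Gamma c) * (Real.Gamma (1/2) / Real.Gamma (1/2)) by ring,
    div_self hGc.ne', div_self hGh.ne', mul_one, mul_one, hrefl, div_div]
  rw [div_eq_div_iff (by positivity) (by positivity)]
  ring
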